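/- For the focal surface X*(u,v) = γ(u) + (1/κ(u))N₁(u) + (tan v/κ(u))N₂ of a tubular surface around a unit-speed planar curve γ with curvature κ ≠ 0: the u-parameter curves are asymptotic (⟨X*_uu, N*⟩ = 0, where N* = -T) if and only if κ'(u) = 0 — hence under the regularity assumption κ' ≠ 0 the u-parameter curves are never asymptotic — while the v-parameter curves are always asymptotic, since ⟨X*_vv, N*⟩ = 0 identically. -/

import Mathlib

open Real RealInnerProductSpace

noncomputable def cross3 (x y : EuclideanSpace ℝ (Fin 3)) : EuclideanSpace ℝ (Fin 3) :=
  WithLp.toLp 2 ![x 1 * y 2 - x 2 * y 1,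
    x 2 * y 0 - x 0 * y 2,
    x 0 * y 1 - x 1 * y 0]

theorem stmt10
    (γ T N₁ : ℝ → EuclideanSpace ℝ (Fin 3)) (N₂ : EuclideanSpace ℝ (Fin 3))
    (κ : ℝ → ℝ)
    (hγ : ∀ u, HasDerivAt γ (T u) u)
    (hT : ∀ u, HasDerivAt T (κ u • N₁ u) u)
    (hN₁ : ∀ u, HasDerivAt N₁ ((-κ u) • T u) u)
    (hTT : ∀ u, ⟪T u, T u⟫ = 1)
    (hN₁N₁ : ∀ u, ⟪N₁ u, N₁ u⟫ = 1)
    (hN₂N₂ : ⟪N₂, N₂⟫ = 1)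
    (hTN₁ : ∀ u, ⟪T u, N₁ u⟫ = 0)
    (hTN₂ : ∀ u, ⟪T u, N₂⟫ = 0)
    (hN₁N₂ : ∀ u, ⟪N₁ u, N₂⟫ = 0)
    (horient : ∀ u, cross3 (T u) (N₁ u) = N₂)
    (κ' : ℝ → ℝ) (hκ' : ∀ u, HasDerivAt κ (κ' u) u)
    (κ'' : ℝ → ℝ) (hκ'' : ∀ u, HasDerivAt κ' (κ'' u) u)
    (Xs : ℝ → ℝ → EuclideanSpace ℝ (Fin 3))
    (hXs : ∀ u v, Xs u v = γ u + (κ u)⁻¹ • N₁ u + (tan v / κ u) • N₂)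
    (Xsu Xsv : ℝ → ℝ → EuclideanSpace ℝ (Fin 3))
    (hXsu : ∀ u v, HasDerivAt (fun u' => Xs u' v) (Xsu u v) u)
    (hXsv : ∀ u v, HasDerivAt (fun v' => Xs u v') (Xsv u v) v)
    (u v : ℝ) (Xsuu Xsuv Xsvv : EuclideanSpace ℝ (Fin 3))
    (hXsuu : HasDerivAt (fun u' => Xsu u' v) Xsuu u)
    (hXsuv : HasDerivAt (fun v' => Xsu u v') Xsuv v)
    (hXsvv : HasDerivAt (fun v' => Xsv u v') Xsvv v)
    (hκ0 : κ u ≠ 0) (hcos : cos v ≠ 0) :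
    (⟪Xsuu, -T u⟫ = 0 ↔ κ' u = 0) ∧
    (κ' u ≠ 0 → ⟪Xsuu, -T u⟫ ≠ 0) ∧
    ⟪Xsvv, -T u⟫ = 0 := by
  have hN₁T : ∀ w, ⟪N₁ w, T w⟫ = 0 := fun w => by rw [real_inner_comm]; exact hTN₁ w
  have hN₂T : ∀ w, ⟪N₂, T w⟫ = 0 := fun w => by rw [real_inner_comm]; exact hTN₂ w
  -- formula for Xsu near u
  set F : ℝ → EuclideanSpace ℝ (Fin 3) :=
    fun u' => (-κ' u' / κ u' ^ 2) • (N₁ u' + tan v • N₂) with hF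
  have hXsuF : ∀ u', κ u' ≠ 0 → Xsu u' v = F u' := by
    intro u' h
    have h1 : HasDerivAt (fun x => (κ x)⁻¹ • N₁ x)
        ((κ u')⁻¹ • ((-κ u') • T u') + (-κ' u' / κ u' ^ 2) • N₁ u') u' :=
      ((hκ' u').inv h).smul (hN₁ u')
    have h2 : HasDerivAt (fun x => (tan v / κ x) • N₂)
        ((tan v * (-κ' u' / κ u' ^ 2)) • N₂) u' := by
      have := (((hκ' u').inv h).const_mul (tan v)).smul_const N₂
      simpa [div_eq_mul_inv] using this
    have h3 : HasDerivAt (fun u'' => Xs u'' v)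
        (T u' + ((κ u')⁻¹ • ((-κ u') • T u') + (-κ' u' / κ u' ^ 2) • N₁ u')
          + (tan v * (-κ' u' / κ u' ^ 2)) • N₂) u' := by
      have := ((hγ u').add h1).add h2
      apply this.congr_of_eventuallyEq
      filter_upwards with x
      rw [hXs]; rfl
    have heq : (T u' + ((κ u')⁻¹ • ((-κ u') • T u') + (-κ' u' / κ u' ^ 2) • N₁ u')
          + (tan v * (-κ' u' / κ u' ^ 2)) • N₂) = F u' := by
      rw [hF, smul_smul, show (κ u')⁻¹ * (-κ u') = -1 by field_simp]
      module
    rw [← heq]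
    exact (hXsu u' v).unique h3
  -- derivative of F at u
  have hκne : ∀ᶠ u' in nhds u, κ u' ≠ 0 := (hκ' u).continuousAt.eventually_ne hκ0
  have hev : (fun u' => Xsu u' v) =ᶠ[nhds u] F := hκne.mono fun u' h => hXsuF u' h
  have hc : HasDerivAt (fun u' => -κ' u' / κ u' ^ 2)
      ((-κ'' u * κ u ^ 2 - (-κ' u) * (2 * κ u ^ 1 * κ' u)) / (κ u ^ 2) ^ 2) u :=
    ((hκ'' u).neg).div ((hκ' u).pow 2) (pow_ne_zero _ hκ0)
  have hvec : HasDerivAt (fun u' => N₁ u' + tan v • N₂) ((-κ u) • T u) u :=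
    (hN₁ u).add_const _
  have hFd : HasDerivAt F
      ((-κ' u / κ u ^ 2) • ((-κ u) • T u)
        + ((-κ'' u * κ u ^ 2 - (-κ' u) * (2 * κ u ^ 1 * κ' u)) / (κ u ^ 2) ^ 2)
            • (N₁ u + tan v • N₂)) u := hc.smul hvec
  have hXsuuEq : Xsuu = (-κ' u / κ u ^ 2) • ((-κ u) • T u)
        + ((-κ'' u * κ u ^ 2 - (-κ' u) * (2 * κ u ^ 1 * κ' u)) / (κ u ^ 2) ^ 2)
            • (N₁ u + tan v • N₂) :=
    hXsuu.unique (hFd.congr_of_eventuallyEq hev)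
  have hinner : ⟪Xsuu, -T u⟫ = -(κ' u / κ u) := by
    rw [hXsuuEq]
    simp only [inner_add_left, inner_neg_right, real_inner_smul_left, hTT, hN₁T, hN₂T,
      mul_zero, mul_one, add_zero, zero_add, mul_neg, neg_neg, neg_zero]
    field_simp
  -- v-direction
  have hXsvF : ∀ v', cos v' ≠ 0 → Xsv u v' = ((1 / cos v' ^ 2) * (κ u)⁻¹) • N₂ := by
    intro v' h
    have h2 : HasDerivAt (fun v'' => Xs u v'') (((1 / cos v' ^ 2) * (κ u)⁻¹) • N₂) v' := by
      have := ((Real.hasDerivAt_tan h).mul_const (κ u)⁻¹).smul_const N₂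
      have h3 : HasDerivAt (fun v'' => γ u + (κ u)⁻¹ • N₁ u + (tan v'' * (κ u)⁻¹) • N₂)
          (((1 / cos v' ^ 2) * (κ u)⁻¹) • N₂) v' := by
        simpa using (this.const_add (γ u + (κ u)⁻¹ • N₁ u))
      apply h3.congr_of_eventuallyEq
      filter_upwards with x
      rw [hXs, div_eq_mul_inv]
    exact (hXsv u v').unique h2
  have hcosne : ∀ᶠ v' in nhds v, cos v' ≠ 0 :=
    Real.continuous_cos.continuousAt.eventually_ne hcos
  have hevv : (fun v' => Xsv u v') =ᶠ[nhds v] fun v' => ((1 / cos v' ^ 2) * (κ u)⁻¹) • N₂ :=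
    hcosne.mono fun v' h => hXsvF v' h
  have hs : HasDerivAt (fun v' => (1 / cos v' ^ 2) * (κ u)⁻¹)
      (((0 * cos v ^ 2 - 1 * (2 * cos v ^ 1 * (-Real.sin v))) / (cos v ^ 2) ^ 2) * (κ u)⁻¹) v :=
    ((hasDerivAt_const v (1:ℝ)).div ((Real.hasDerivAt_cos v).pow 2)
      (pow_ne_zero _ hcos)).mul_const _
  have hGd : HasDerivAt (fun v' => ((1 / cos v' ^ 2) * (κ u)⁻¹) • N₂)
      ((((0 * cos v ^ 2 - 1 * (2 * cos v ^ 1 * (-Real.sin v))) / (cos v ^ 2) ^ 2) * (κ u)⁻¹) • N₂) v :=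
    hs.smul_const N₂
  have hXsvvEq : Xsvv = (((0 * cos v ^ 2 - 1 * (2 * cos v ^ 1 * (-Real.sin v))) / (cos v ^ 2) ^ 2) * (κ u)⁻¹) • N₂ :=
    hXsvv.unique (hGd.congr_of_eventuallyEq hevv)
  refine ⟨?_, ?_, ?_⟩
  · rw [hinner]
    constructor
    · intro h
      have : κ' u / κ u = 0 := by linarith
      rcases div_eq_zero_iff.mp this with h' | h'
      · exact h'
      · exact absurd h' hκ0
    · intro h; rw [h]; simp
  · intro h
    rw [hinner]
    intro hcontra
    have : κ' u / κ u = 0 := by linarith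
    rcases div_eq_zero_iff.mp this with h' | h'
    · exact h h'
    · exact hκ0 h'
  · rw [hXsvvEq]
    simp only [real_inner_smul_left, inner_neg_right, hN₂T, mul_zero, neg_zero]
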